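/- arXiv:2410.16328 — 2 statements merged into one kernel-verified Lean document; each statement's English description precedes it below -/
import Mathlib

section
/- Let P : Cᵒᵖ → BoolAlg be a Boolean doctrine over a small category C with finite products. Let ī, j̄ ∈ ℕ, let S, Y₁, …, Y_ī, Z₁, …, Z_j̄ ∈ C, let αᵢ ∈ P(S×Yᵢ) for i = 1, …, ī and βⱼ ∈ P(S×Zⱼ) for j = 1, …, j̄. Then the following are equivalent: (1) for every propositional model (M, 𝔪, s) of P at S, if for every i ∈ {1, …, ī} and every y ∈ M(Yᵢ) one has (s, y) ∈ 𝔪_{S×Yᵢ}(αᵢ), then there is j ∈ {1, …, j̄} such that for every z ∈ M(Zⱼ) one has (s, z) ∈ 𝔪_{S×Zⱼ}(βⱼ); (2) there are n ∈ ℕ, indices l₁, …, l_n ∈ {1, …, ī} and morphisms gᵢ : S × ∏_{j=1}^{j̄} Zⱼ → Y_{lᵢ} (i = 1, …, n) such that, in P(S × ∏_{j=1}^{j̄} Zⱼ), ⋀_{i=1}^{n} P(⟨pr₁, gᵢ⟩)(α_{lᵢ}) ≤ ⋁_{j=1}^{j̄} P(⟨pr₁, pr_{j+1}⟩)(βⱼ).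 (Here elements of M(S×X) are identified with pairs via the canonical isomorphism M(S×X) ≅ M(S) × M(X).) -/
open CategoryTheory CategoryTheory.Limits Opposite

universe w v u v₁ u₁ v₂ u₂ v₃ u₃

namespace BooleanDoctrine

/-- Elements of a Boolean algebra in the category `BoolAlg` can be acted on by morphisms. -/
instance (X Y : BoolAlg) : FunLike (X ⟶ Y) X Y :=
  show FunLike (X ⟶ Y) X Y from ConcreteCategory.instFunLike

/-- A filter of a Boolean algebra: contains `⊤`, closed under binary meets, upward closed. -/
def IsBAFilter {A : Type*} [BooleanAlgebra A] (F : Set A) : Prop :=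
  (⊤ : A) ∈ F ∧ (∀ a b : A, a ∈ F → b ∈ F → a ⊓ b ∈ F) ∧ ∀ a b : A, a ∈ F → a ≤ b → b ∈ F

/-- The fiber of a Boolean doctrine at an object of the base category. -/
abbrev fiber {C : Type u₁} [Category.{v₁} C] (P : Cᵒᵖ ⥤ BoolAlg.{w}) (X : C) : Type w :=
  P.obj (op X)

/-- A universal filter for a Boolean doctrine `P : Cᵒᵖ ⥤ BoolAlg`. -/
def IsUniversalFilter {C : Type u₁} [Category.{v₁} C] [HasFiniteProducts C]
    (P : Cᵒᵖ ⥤ BoolAlg.{w}) (F : ∀ X : C, Set (P.obj (op X))) : Prop :=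
  (∀ (X Y : C) (f : X ⟶ Y) (α : P.obj (op Y)), α ∈ F Y → P.map f.op α ∈ F X) ∧
    ∀ X : C, IsBAFilter (F X)

/-- A universal ideal for a Boolean doctrine `P : Cᵒᵖ ⥤ BoolAlg`. -/
def IsUniversalIdeal {C : Type u₁} [Category.{v₁} C] [HasFiniteProducts C]
    (P : Cᵒᵖ ⥤ BoolAlg.{w}) (I : ∀ X : C, Set (P.obj (op X))) : Prop :=
  (∀ (X Y : C) (m : ℕ) (f : Fin m → (X ⟶ Y)) (α : P.obj (op Y)),
      (Finset.univ.inf fun j => P.map (f j).op α) ∈ I X → α ∈ I Y) ∧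
    (∀ (X : C) (a b : P.obj (op X)), a ≤ b → b ∈ I X → a ∈ I X) ∧
    (∀ (X₁ X₂ : C) (α₁ : P.obj (op X₁)) (α₂ : P.obj (op X₂)), α₁ ∈ I X₁ → α₂ ∈ I X₂ →
      P.map (prod.fst : X₁ ⨯ X₂ ⟶ X₁).op α₁ ⊔ P.map (prod.snd : X₁ ⨯ X₂ ⟶ X₂).op α₂ ∈
        I (X₁ ⨯ X₂)) ∧
    (⊥ : P.obj (op (⊤_ C))) ∈ I (⊤_ C)

/-- A universal ultrafilter for a Boolean doctrine `P : Cᵒᵖ ⥤ BoolAlg`. -/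
def IsUniversalUltrafilter {C : Type u₁} [Category.{v₁} C] [HasFiniteProducts C]
    (P : Cᵒᵖ ⥤ BoolAlg.{w}) (F : ∀ X : C, Set (P.obj (op X))) : Prop :=
  (∀ (X Y : C) (f : X ⟶ Y) (α : P.obj (op Y)), α ∈ F Y → P.map f.op α ∈ F X) ∧
    (∀ X : C, IsBAFilter (F X)) ∧
    (∀ (X₁ X₂ : C) (α₁ : P.obj (op X₁)) (α₂ : P.obj (op X₂)),
      P.map (prod.fst : X₁ ⨯ X₂ ⟶ X₁).op α₁ ⊔ P.map (prod.snd : X₁ ⨯ X₂ ⟶ X₂).op α₂ ∈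
          F (X₁ ⨯ X₂) →
        α₁ ∈ F X₁ ∨ α₂ ∈ F X₂) ∧
    (⊥ : P.obj (op (⊤_ C))) ∉ F (⊤_ C)

/-- Richness of a Boolean doctrine with respect to a family of subsets of the fibers. -/
def IsRich {C : Type u₁} [Category.{v₁} C] [HasFiniteProducts C]
    (P : Cᵒᵖ ⥤ BoolAlg.{w}) (F : ∀ X : C, Set (P.obj (op X))) : Prop :=
  ∀ (X : C) (α : P.obj (op X)), α ∉ F X → ∃ c : (⊤_ C) ⟶ X, P.map c.op α ∉ F (⊤_ C)

/-- The failure of the "universal closure" of `a` witnessed by a constant `c : ⊤ ⟶ X`. -/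
def IsRichAt {C : Type u₁} [Category.{v₁} C] [HasFiniteProducts C]
    (P : Cᵒᵖ ⥤ BoolAlg.{w}) (F : ∀ X : C, Set (P.obj (op X)))
    (X : C) (a : P.obj (op X)) : Prop :=
  ∃ c : (⊤_ C) ⟶ X, P.map c.op a ∉ F (⊤_ C)

/-- The universal filter generated by a family of subsets of the fibers: the intersection of
all universal filters containing the family componentwise. -/
def genUnivFilter {C : Type u₁} [Category.{v₁} C] [HasFiniteProducts C]
    (P : Cᵒᵖ ⥤ BoolAlg.{w}) (A : ∀ X : C, Set (P.obj (op X))) :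
    ∀ X : C, Set (P.obj (op X)) := fun X =>
  {φ | ∀ G : ∀ X' : C, Set (P.obj (op X')),
    IsUniversalFilter P G → (∀ X', A X' ⊆ G X') → φ ∈ G X}

/-- The universal ideal generated by a family of subsets of the fibers: the intersection of
all universal ideals containing the family componentwise. -/
def genUnivIdeal {C : Type u₁} [Category.{v₁} C] [HasFiniteProducts C]
    (P : Cᵒᵖ ⥤ BoolAlg.{w}) (A : ∀ X : C, Set (P.obj (op X))) :
    ∀ X : C, Set (P.obj (op X)) := fun X =>
  {φ | ∀ J : ∀ X' : C, Set (P.obj (op X')),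
    IsUniversalIdeal P J → (∀ X', A X' ⊆ J X') → φ ∈ J X}

/-- The family of subsets of the fibers placing the element `α i` in the component `Y i`. -/
def familyOfPoints {C : Type u₁} [Category.{v₁} C] (P : Cᵒᵖ ⥤ BoolAlg.{w}) {ι : Type u₃}
    (Y : ι → C) (α : ∀ i, P.obj (op (Y i))) : ∀ X : C, Set (P.obj (op X)) := fun X =>
  {a | ∃ (i : ι) (h : Y i = X), a = P.map (eqToHom h.symm).op (α i)}

/-- The subsets doctrine, sending a set to its powerset Boolean algebra and a function to
its preimage map. -/
def subsetsDoctrine : (Type v)ᵒᵖ ⥤ BoolAlg.{v} where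
  obj X := BoolAlg.of (Set X.unop)
  map f := BoolAlg.ofHom
    { toFun := fun S => f.unop ⁻¹' S
      map_sup' := fun _ _ => rfl
      map_inf' := fun _ _ => rfl
      map_top' := rfl
      map_bot' := rfl }
  map_id _ := rfl
  map_comp _ _ := rfl

/-- A Boolean doctrine morphism: a finite-product-preserving functor together with a
natural transformation. -/
structure DoctrineHom {C : Type u₁} [Category.{v₁} C] {D : Type u₂} [Category.{v₂} D]
    (P : Cᵒᵖ ⥤ BoolAlg.{w}) (R : Dᵒᵖ ⥤ BoolAlg.{w}) where
  functor : C ⥤ D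
  preserves : PreservesFiniteProducts functor
  trans : P ⟶ functor.op ⋙ R

/-- Composition of Boolean doctrine morphisms. -/
def DoctrineHom.comp {C : Type u₁} [Category.{v₁} C] {D : Type u₂} [Category.{v₂} D]
    {E : Type u₃} [Category.{v₃} E]
    {P : Cᵒᵖ ⥤ BoolAlg.{w}} {R : Dᵒᵖ ⥤ BoolAlg.{w}} {S : Eᵒᵖ ⥤ BoolAlg.{w}}
    (Φ : DoctrineHom P R) (Ψ : DoctrineHom R S) : DoctrineHom P S where
  functor := Φ.functor ⋙ Ψ.functor
  preserves := by
    have := Φ.preserves; have := Ψ.preserves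
    infer_instance
  trans := Φ.trans ≫ Functor.whiskerLeft Φ.functor.op Ψ.trans

/-- A first-order structure on a Boolean doctrine: fiberwise right adjoints to reindexing
along first projections, satisfying the Beck–Chevalley condition. -/
structure FOStructure {C : Type u₁} [Category.{v₁} C] [HasFiniteProducts C]
    (P : Cᵒᵖ ⥤ BoolAlg.{w}) where
  fa : ∀ X Y : C, P.obj (op (X ⨯ Y)) → P.obj (op X)
  adj : ∀ (X Y : C) (α : P.obj (op X)) (β : P.obj (op (X ⨯ Y))),
      α ≤ fa X Y β ↔ P.map (prod.fst : X ⨯ Y ⟶ X).op α ≤ β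
  bc : ∀ (X X' Y : C) (f : X' ⟶ X) (β : P.obj (op (X ⨯ Y))),
      P.map f.op (fa X Y β) = fa X' Y (P.map (prod.map f (𝟙 Y)).op β)

/-- The existential quantifier `∃ = ¬∀¬` associated to a first-order structure. -/
noncomputable def FOStructure.ex {C : Type u₁} [Category.{v₁} C] [HasFiniteProducts C]
    {P : Cᵒᵖ ⥤ BoolAlg.{w}} (fo : FOStructure P) (X Y : C)
    (β : P.obj (op (X ⨯ Y))) : P.obj (op X) :=
  (fo.fa X Y βᶜ)ᶜ

/-- The canonical comparison morphism `M X ⨯ M Y ⟶ M (X ⨯ Y)` of a Boolean doctrine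
morphism, inverse to the product comparison morphism. -/
noncomputable def DoctrineHom.prodPair {C : Type u₁} [Category.{v₁} C] [HasFiniteProducts C]
    {D : Type u₂} [Category.{v₂} D] [HasFiniteProducts D]
    {P : Cᵒᵖ ⥤ BoolAlg.{w}} {R : Dᵒᵖ ⥤ BoolAlg.{w}} (Φ : DoctrineHom P R) (X Y : C) :
    (Φ.functor.obj X ⨯ Φ.functor.obj Y) ⟶ Φ.functor.obj (X ⨯ Y) :=
  letI := Φ.preserves
  (PreservesLimitPair.iso Φ.functor X Y).inv

/-- The image of an element of `P (X ⨯ Y)` in `R (M X ⨯ M Y)`, transported along the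
canonical isomorphism `M (X ⨯ Y) ≅ M X ⨯ M Y`. -/
noncomputable def DoctrineHom.transProd {C : Type u₁} [Category.{v₁} C] [HasFiniteProducts C]
    {D : Type u₂} [Category.{v₂} D] [HasFiniteProducts D]
    {P : Cᵒᵖ ⥤ BoolAlg.{w}} {R : Dᵒᵖ ⥤ BoolAlg.{w}} (Φ : DoctrineHom P R) (X Y : C)
    (α : P.obj (op (X ⨯ Y))) : R.obj (op (Φ.functor.obj X ⨯ Φ.functor.obj Y)) :=
  R.map (Φ.prodPair X Y).op (Φ.trans.app (op (X ⨯ Y)) α)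

/-- A Boolean doctrine morphism between first-order Boolean doctrines is first-order when it
commutes with the universal quantifiers. -/
def DoctrineHom.IsFO {C : Type u₁} [Category.{v₁} C] [HasFiniteProducts C]
    {D : Type u₂} [Category.{v₂} D] [HasFiniteProducts D]
    {P : Cᵒᵖ ⥤ BoolAlg.{w}} {R : Dᵒᵖ ⥤ BoolAlg.{w}} (Φ : DoctrineHom P R)
    (foP : FOStructure P) (foR : FOStructure R) : Prop :=
  ∀ (X Y : C) (β : P.obj (op (X ⨯ Y))),
    (Φ.trans.app (op X) (foP.fa X Y β) : R.obj (op (Φ.functor.obj X))) =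
      foR.fa (Φ.functor.obj X) (Φ.functor.obj Y) (Φ.transProd X Y β)

/-- The Boolean doctrine morphism with identity functor part induced by a natural
transformation between two doctrines over the same base. -/
def idDoctrineHom {C : Type u₁} [Category.{v₁} C] {P Q : Cᵒᵖ ⥤ BoolAlg.{w}} (η : P ⟶ Q) :
    DoctrineHom P Q where
  functor := 𝟭 C
  preserves := inferInstance
  trans := η

/-- A quantifier completion of a Boolean doctrine `P`: a first-order Boolean doctrine `Q`
over the same base category together with a Boolean doctrine morphism `(𝟭 C, ι) : P ⟶ Q`
whose functor part is the identity, such that every Boolean doctrine morphism from `P` to a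
first-order Boolean doctrine factors uniquely through it via a first-order Boolean doctrine
morphism. -/
structure QuantifierCompletion.{w', v', u', v₁', u₁'} {C : Type u₁'} [Category.{v₁'} C]
    [HasFiniteProducts C] (P : Cᵒᵖ ⥤ BoolAlg.{w'}) where
  Q : Cᵒᵖ ⥤ BoolAlg.{w'}
  fo : FOStructure Q
  ι : P ⟶ Q
  univ : ∀ {D : Type u'} [Category.{v'} D] [HasFiniteProducts D]
      (R : Dᵒᵖ ⥤ BoolAlg.{w'}) (foR : FOStructure R) (Φ : DoctrineHom P R),
      ∃! Ψ : DoctrineHom Q R, Ψ.IsFO fo foR ∧ Φ = (idDoctrineHom ι).comp Ψ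

/-- A propositional model of a Boolean doctrine: a Boolean doctrine morphism to the
subsets doctrine. -/
abbrev PropModel {C : Type u} [Category.{v} C] (P : Cᵒᵖ ⥤ BoolAlg.{v}) :=
  DoctrineHom P subsetsDoctrine.{v}

/-- The subset of `M X` interpreting an element `α ∈ P X` in a propositional model. -/
def PropModel.interp {C : Type u} [Category.{v} C] {P : Cᵒᵖ ⥤ BoolAlg.{v}}
    (M : PropModel P) {X : C} (α : P.obj (op X)) : Set (M.functor.obj X) :=
  M.trans.app (op X) α



/-- The object map of a Boolean doctrine morphism. -/
abbrev DoctrineHom.onObj {C : Type u₁} [Category.{v₁} C] {D : Type u₂} [Category.{v₂} D]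
    {P : Cᵒᵖ ⥤ BoolAlg.{w}} {R : Dᵒᵖ ⥤ BoolAlg.{w}} (Φ : DoctrineHom P R) (X : C) : D :=
  Φ.functor.obj X

/-- The component at `X` of the natural transformation of a Boolean doctrine morphism,
applied to an element of the fiber. -/
abbrev DoctrineHom.appAt {C : Type u₁} [Category.{v₁} C] {D : Type u₂} [Category.{v₂} D]
    {P : Cᵒᵖ ⥤ BoolAlg.{w}} {R : Dᵒᵖ ⥤ BoolAlg.{w}} (Φ : DoctrineHom P R) (X : C)
    (a : P.obj (op X)) : R.obj (op (Φ.functor.obj X)) :=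
  Φ.trans.app (op X) a


instance (X Y : BoolAlg) : BoundedLatticeHomClass (X ⟶ Y) X Y where
  map_sup f := map_sup f.hom
  map_inf f := map_inf f.hom
  map_top f := map_top f.hom
  map_bot f := map_bot f.hom

section PrimeFilter
variable {A : Type*} [BooleanAlgebra A]

def IsProperFilter (G : Set A) : Prop :=
  (⊤ : A) ∈ G ∧ (∀ a b : A, a ∈ G → b ∈ G → a ⊓ b ∈ G) ∧
    (∀ a b : A, a ∈ G → a ≤ b → b ∈ G) ∧ (⊥ : A) ∉ G

theorem exists_prime_filter (F : Set A) (hF : IsProperFilter F) :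
    ∃ U : Set A, F ⊆ U ∧ IsProperFilter U ∧ ∀ a : A, a ∉ U → aᶜ ∈ U := by
  obtain ⟨U, hFU, hUmax⟩ := zorn_subset_nonempty {G : Set A | F ⊆ G ∧ IsProperFilter G}
    (fun c hc hchain hcne => by
      obtain ⟨G₀, hG₀⟩ := hcne
      refine ⟨⋃₀ c, ⟨(hc hG₀).1.trans (Set.subset_sUnion_of_mem hG₀), ?_, ?_, ?_, ?_⟩,
        fun s hs => Set.subset_sUnion_of_mem hs⟩
      · exact ⟨G₀, hG₀, (hc hG₀).2.1⟩
      · rintro a b ⟨G₁, hG₁, ha⟩ ⟨G₂, hG₂, hb⟩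
        rcases hchain.total hG₁ hG₂ with h | h
        · exact ⟨G₂, hG₂, (hc hG₂).2.2.1 a b (h ha) hb⟩
        · exact ⟨G₁, hG₁, (hc hG₁).2.2.1 a b ha (h hb)⟩
      · rintro a b ⟨G₁, hG₁, ha⟩ hab
        exact ⟨G₁, hG₁, (hc hG₁).2.2.2.1 a b ha hab⟩
      · rintro ⟨G₁, hG₁, hbot⟩
        exact (hc hG₁).2.2.2.2 hbot)
    F ⟨subset_rfl, hF⟩
  have hU : IsProperFilter U := hUmax.1.2
  refine ⟨U, hFU, hU, fun a ha => ?_⟩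
  set U' : Set A := {x | ∃ u ∈ U, u ⊓ a ≤ x} with hU'def
  have hUU' : U ⊆ U' := fun u hu => ⟨u, hu, inf_le_left⟩
  by_cases hbot : (⊥ : A) ∈ U'
  · obtain ⟨u, hu, hua⟩ := hbot
    have : u ≤ aᶜ := le_compl_iff_disjoint_right.2 (disjoint_iff_inf_le.2 hua)
    exact hU.2.2.1 u aᶜ hu this
  · exfalso
    have hU'mem : U' ∈ {G : Set A | F ⊆ G ∧ IsProperFilter G} := by
      refine ⟨hFU.trans hUU', ⟨⊤, hU.1, inf_le_left⟩, ?_, ?_, hbot⟩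
      · rintro x y ⟨u₁, hu₁, h₁⟩ ⟨u₂, hu₂, h₂⟩
        refine ⟨u₁ ⊓ u₂, hU.2.1 u₁ u₂ hu₁ hu₂, ?_⟩
        calc u₁ ⊓ u₂ ⊓ a ≤ (u₁ ⊓ a) ⊓ (u₂ ⊓ a) := by
              refine le_inf (inf_le_inf_right a inf_le_left) (inf_le_inf_right a inf_le_right)
          _ ≤ x ⊓ y := inf_le_inf h₁ h₂
      · rintro x y ⟨u, hu, hx⟩ hxy
        exact ⟨u, hu, hx.trans hxy⟩
    have := hUmax.2 hU'mem hUU'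
    exact ha (this ⟨⊤, hU.1, inf_le_right⟩)

theorem sup_mem_iff_of_prime {U : Set A} (hU : IsProperFilter U)
    (hp : ∀ a : A, a ∉ U → aᶜ ∈ U) {a b : A} : a ⊔ b ∈ U ↔ a ∈ U ∨ b ∈ U := by
  constructor
  · intro h
    by_contra hcon
    push_neg at hcon
    have ha := hp a hcon.1
    have hb := hp b hcon.2
    have : aᶜ ⊓ bᶜ ∈ U := hU.2.1 _ _ ha hb
    have : (a ⊔ b) ⊓ (aᶜ ⊓ bᶜ) ∈ U := hU.2.1 _ _ h this
    rw [← compl_sup, inf_compl_eq_bot] at this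
    exact hU.2.2.2 this
  · rintro (h | h)
    · exact hU.2.2.1 _ _ h le_sup_left
    · exact hU.2.2.1 _ _ h le_sup_right

theorem inf_mem_iff {U : Set A} (hU : IsProperFilter U) {a b : A} :
    a ⊓ b ∈ U ↔ a ∈ U ∧ b ∈ U :=
  ⟨fun h => ⟨hU.2.2.1 _ _ h inf_le_left, hU.2.2.1 _ _ h inf_le_right⟩,
   fun h => hU.2.1 _ _ h.1 h.2⟩

end PrimeFilter

/-- Auxiliary: the propositional model induced by an object `W` and a prime proper filter on
the fiber `P(W)`, with functor `coyoneda.obj (op W)`. -/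
noncomputable def ultraModel {C : Type u} [SmallCategory C] [HasFiniteProducts C]
    (P : Cᵒᵖ ⥤ BoolAlg.{u}) (W : C) (U : Set (P.obj (op W)))
    (hU : IsProperFilter U) (hp : ∀ a, a ∉ U → aᶜ ∈ U) : PropModel P where
  functor := coyoneda.obj (op W)
  preserves := ⟨fun _ => inferInstance⟩
  trans :=
    { app := fun X => BoolAlg.ofHom
        { toFun := fun a => {f : W ⟶ X.unop | P.map f.op a ∈ U}
          map_sup' := fun a b => Set.ext fun f => by
            simp only [Set.mem_setOf_eq, map_sup]
            exact (sup_mem_iff_of_prime hU hp).trans Iff.rfl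
          map_inf' := fun a b => Set.ext fun f => by
            simp only [Set.mem_setOf_eq, map_inf]
            exact (inf_mem_iff hU).trans Iff.rfl
          map_top' := Set.ext fun f => by
            simp only [Set.mem_setOf_eq, map_top]
            exact iff_of_true hU.1 trivial
          map_bot' := Set.ext fun f => by
            simp only [Set.mem_setOf_eq, map_bot]
            exact iff_of_false hU.2.2.2 (fun h => h) }
      naturality := fun X Y f => by
        apply BoolAlg.hom_ext
        apply DFunLike.ext
        intro a
        apply Set.ext
        intro g
        show P.map g.op (P.map f a) ∈ U ↔ P.map (g ≫ f.unop).op a ∈ U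
        rw [op_comp]
        have : f.unop.op = f := rfl
        rw [this, P.map_comp]
        rfl }

section TypeHelpers

variable {C : Type u} [SmallCategory C] [HasFiniteProducts C]

/-- A finite-product-preserving functor to `Type` induces a bijection onto pairs. -/
theorem pair_bijective (F : C ⥤ Type u) (A B : C) [PreservesLimit (pair A B) F] :
    Function.Bijective (fun x : F.obj (A ⨯ B) =>
      (F.map (prod.fst : A ⨯ B ⟶ A) x, F.map (prod.snd : A ⨯ B ⟶ B) x)) := by
  have key : (fun x : F.obj (A ⨯ B) =>
      (F.map (prod.fst : A ⨯ B ⟶ A) x, F.map (prod.snd : A ⨯ B ⟶ B) x)) =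
      (PreservesLimitPair.iso F A B ≪≫ Types.binaryProductIso (F.obj A) (F.obj B)).toEquiv := by
    funext x
    have h1 := types_congr_hom (Types.binaryProductIso_hom_comp_fst (F.obj A) (F.obj B))
      ((PreservesLimitPair.iso F A B).hom x)
    have h2 := types_congr_hom (Types.binaryProductIso_hom_comp_snd (F.obj A) (F.obj B))
      ((PreservesLimitPair.iso F A B).hom x)
    have h3 := types_congr_hom (prodComparison_fst F A B) x
    have h4 := types_congr_hom (prodComparison_snd F A B) x
    simp only [types_comp_apply] at h1 h2 h3 h4
    refine Prod.ext ?_ ?_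
    · show F.map prod.fst x = _
      rw [← h3, ← PreservesLimitPair.iso_hom]
      exact h1.symm
    · show F.map prod.snd x = _
      rw [← h4, ← PreservesLimitPair.iso_hom]
      exact h2.symm
  rw [key]
  exact (PreservesLimitPair.iso F A B ≪≫
    Types.binaryProductIso (F.obj A) (F.obj B)).toEquiv.bijective

/-- A product-preserving functor to `Type` induces a bijection onto families. -/
theorem pi_bijective (F : C ⥤ Type u) {m : ℕ} (Z : Fin m → C)
    [PreservesLimit (Discrete.functor Z) F] :
    Function.Bijective (fun (x : F.obj (∏ᶜ Z)) (j : Fin m) => F.map (Pi.π Z j) x) := by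
  have key : (fun (x : F.obj (∏ᶜ Z)) (j : Fin m) => F.map (Pi.π Z j) x) =
      (PreservesProduct.iso F Z ≪≫ Types.productIso (fun j => F.obj (Z j))).toEquiv := by
    funext x
    funext j
    have h1 := types_congr_hom (Types.productIso_hom_comp_eval (fun j => F.obj (Z j)) j)
      ((PreservesProduct.iso F Z).hom x)
    have h2 := types_congr_hom (piComparison_comp_π F Z j) x
    simp only [types_comp_apply] at h1 h2
    show F.map (Pi.π Z j) x = _
    rw [← h2, ← PreservesProduct.iso_hom]
    exact h1.symm
  rw [key]
  exact (PreservesProduct.iso F Z ≪≫ Types.productIso (fun j => F.obj (Z j))).toEquiv.bijective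

end TypeHelpers

section InterpHelpers

variable {C : Type u} [SmallCategory C] {P : Cᵒᵖ ⥤ BoolAlg.{u}}

theorem interp_map (M : PropModel P) {X X' : C} (f : X ⟶ X') (a : P.obj (op X')) :
    PropModel.interp M (P.map f.op a) = M.functor.map f ⁻¹' PropModel.interp M a := by
  have h := DFunLike.congr_fun (M.trans.naturality f.op) a
  exact h

end InterpHelpers

theorem stmt3 {C : Type u} [SmallCategory C] [HasFiniteProducts C]
    (P : Cᵒᵖ ⥤ BoolAlg.{u}) {ibar jbar : ℕ} (S : C) (Y : Fin ibar → C) (Z : Fin jbar → C)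
    (α : ∀ i, P.obj (op (S ⨯ Y i))) (β : ∀ j, P.obj (op (S ⨯ Z j))) :
    (∀ (M : PropModel P) (s : M.functor.obj S),
        (∀ i, ∀ w : M.functor.obj (S ⨯ Y i),
            M.functor.map (prod.fst : S ⨯ Y i ⟶ S) w = s → w ∈ PropModel.interp M (α i)) →
          ∃ j, ∀ w : M.functor.obj (S ⨯ Z j),
            M.functor.map (prod.fst : S ⨯ Z j ⟶ S) w = s → w ∈ PropModel.interp M (β j)) ↔
      ∃ (n : ℕ) (l : Fin n → Fin ibar) (g : ∀ i : Fin n, (S ⨯ ∏ᶜ Z) ⟶ Y (l i)),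
        (Finset.univ.inf fun i =>
            P.map (prod.lift (prod.fst : S ⨯ ∏ᶜ Z ⟶ S) (g i)).op (α (l i))) ≤
          Finset.univ.sup fun j =>
            P.map (prod.lift (prod.fst : S ⨯ ∏ᶜ Z ⟶ S)
              ((prod.snd : S ⨯ ∏ᶜ Z ⟶ ∏ᶜ Z) ≫ Pi.π Z j)).op (β j) := by
  classical
  constructor
  · -- (1) → (2)
    intro h1
    by_contra h2
    set b : Fin jbar → P.obj (op (S ⨯ ∏ᶜ Z)) := fun j =>
      P.map (prod.lift (prod.fst : S ⨯ ∏ᶜ Z ⟶ S)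
        ((prod.snd : S ⨯ ∏ᶜ Z ⟶ ∏ᶜ Z) ≫ Pi.π Z j)).op (β j) with hb
    set G : Set (P.obj (op (S ⨯ ∏ᶜ Z))) :=
      {x | (∃ (i : Fin ibar) (g : (S ⨯ ∏ᶜ Z) ⟶ Y i),
          x = P.map (prod.lift prod.fst g).op (α i)) ∨ (∃ j, x = (b j)ᶜ)} with hG
    set F₀ : Set (P.obj (op (S ⨯ ∏ᶜ Z))) :=
      {x | ∃ T : Finset (P.obj (op (S ⨯ ∏ᶜ Z))), (↑T : Set _) ⊆ G ∧ T.inf id ≤ x} with hF₀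
    have hGF₀ : G ⊆ F₀ := fun x hx => ⟨{x}, by simpa using hx, by simp⟩
    have hF₀proper : IsProperFilter F₀ := by
      refine ⟨⟨∅, by simp, by simp⟩, ?_, ?_, ?_⟩
      · rintro x y ⟨T₁, hT₁, hx₁⟩ ⟨T₂, hT₂, hx₂⟩
        refine ⟨T₁ ∪ T₂, by rw [Finset.coe_union]; exact Set.union_subset hT₁ hT₂, ?_⟩
        rw [Finset.inf_union]
        exact inf_le_inf hx₁ hx₂
      · rintro x y ⟨T, hT, hx⟩ hxy
        exact ⟨T, hT, hx.trans hxy⟩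
      · rintro ⟨T, hTG, hT⟩
        apply h2
        set T₁ := T.filter (fun x => ∃ (i : Fin ibar) (g : (S ⨯ ∏ᶜ Z) ⟶ Y i),
          x = P.map (prod.lift prod.fst g).op (α i)) with hT₁def
        have claim : T₁.inf id ⊓ (Finset.univ.sup b)ᶜ ≤ T.inf id := by
          apply Finset.le_inf
          intro t ht
          by_cases hc : ∃ (i : Fin ibar) (g : (S ⨯ ∏ᶜ Z) ⟶ Y i),
              t = P.map (prod.lift prod.fst g).op (α i)
          · exact inf_le_left.trans (Finset.inf_le (Finset.mem_filter.2 ⟨ht, hc⟩))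
          · obtain ⟨j, rfl⟩ := (hTG ht).resolve_left hc
            exact inf_le_right.trans (compl_le_compl (Finset.le_sup (Finset.mem_univ j)))
        have h3 : T₁.inf id ≤ Finset.univ.sup b := by
          have h4 : T₁.inf id ⊓ (Finset.univ.sup b)ᶜ = ⊥ := le_bot_iff.1 (claim.trans hT)
          calc T₁.inf id = T₁.inf id ⊓ (Finset.univ.sup b ⊔ (Finset.univ.sup b)ᶜ) := by
                rw [sup_compl_eq_top, inf_top_eq]
            _ = (T₁.inf id ⊓ Finset.univ.sup b) ⊔ (T₁.inf id ⊓ (Finset.univ.sup b)ᶜ) :=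
                inf_sup_left _ _ _
            _ ≤ Finset.univ.sup b := by rw [h4]; exact sup_le inf_le_right bot_le
        have hmem : ∀ t : T₁, ∃ (i : Fin ibar) (g : (S ⨯ ∏ᶜ Z) ⟶ Y i),
            (t : P.obj (op (S ⨯ ∏ᶜ Z))) = P.map (prod.lift prod.fst g).op (α i) :=
          fun t => (Finset.mem_filter.1 t.2).2
        choose li gi hli using hmem
        refine ⟨T₁.card, fun k => li (T₁.equivFin.symm k), fun k => gi (T₁.equivFin.symm k),
          le_trans (Finset.le_inf ?_) h3⟩
        intro t ht
        have h6 := Finset.inf_le (f := fun k => P.map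
            (prod.lift prod.fst (gi (T₁.equivFin.symm k))).op (α (li (T₁.equivFin.symm k))))
          (Finset.mem_univ (T₁.equivFin ⟨t, ht⟩))
        beta_reduce at h6
        have h7 : T₁.equivFin.symm (T₁.equivFin ⟨t, ht⟩) = ⟨t, ht⟩ :=
          Equiv.symm_apply_apply _ _
        rw [h7] at h6
        rw [← hli ⟨t, ht⟩] at h6
        simpa using h6
    obtain ⟨U, hF₀U, hU, hp⟩ := exists_prime_filter F₀ hF₀proper
    set M := ultraModel P (S ⨯ ∏ᶜ Z) U hU hp with hM
    have hyp : ∀ i, ∀ w : M.functor.obj (S ⨯ Y i),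
        M.functor.map (prod.fst : S ⨯ Y i ⟶ S) w = (prod.fst : S ⨯ ∏ᶜ Z ⟶ S) →
          w ∈ PropModel.interp M (α i) := by
      intro i w hw
      have hw' : w ≫ prod.fst = prod.fst := hw
      have hwe : w = prod.lift prod.fst (w ≫ prod.snd) := by
        apply Limits.prod.hom_ext
        · exact hw'.trans (prod.lift_fst _ _).symm
        · exact (prod.lift_snd _ _).symm
      show P.map w.op (α i) ∈ U
      apply hF₀U
      apply hGF₀
      left
      exact ⟨i, w ≫ prod.snd, by rw [← hwe]⟩
    obtain ⟨j, hj⟩ := h1 M (prod.fst : S ⨯ ∏ᶜ Z ⟶ S) hyp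
    have hbj : b j ∈ U := by
      have := hj (prod.lift prod.fst (prod.snd ≫ Pi.π Z j))
        (show prod.lift prod.fst (prod.snd ≫ Pi.π Z j) ≫ prod.fst = prod.fst from
          prod.lift_fst _ _)
      exact this
    have hbjc : (b j)ᶜ ∈ U := hF₀U (hGF₀ (Or.inr ⟨j, rfl⟩))
    have hbot : (⊥ : P.obj (op (S ⨯ ∏ᶜ Z))) ∈ U := by
      have := hU.2.1 _ _ hbj hbjc
      rwa [inf_compl_eq_bot] at this
    exact hU.2.2.2 hbot
  · -- (2) → (1)
    rintro ⟨n, l, g, hle⟩ M s hyp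
    by_contra hcon
    push_neg at hcon
    choose wz hwz1 hwz2 using hcon
    haveI := M.preserves
    haveI hs1 : PreservesLimitsOfShape (Discrete (Fin jbar)) M.functor :=
      M.preserves.preserves jbar
    haveI hs2 : PreservesLimitsOfShape (Discrete WalkingPair) M.functor :=
      inferInstance
    obtain ⟨z, hz⟩ := (pi_bijective M.functor Z).2
      (fun j => M.functor.map (prod.snd : S ⨯ Z j ⟶ Z j) (wz j))
    obtain ⟨w, hw⟩ := (pair_bijective M.functor S (∏ᶜ Z)).2 (s, z)
    have hwfst : M.functor.map (prod.fst : S ⨯ ∏ᶜ Z ⟶ S) w = s := congrArg Prod.fst hw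
    have hwsnd : M.functor.map (prod.snd : S ⨯ ∏ᶜ Z ⟶ ∏ᶜ Z) w = z := congrArg Prod.snd hw
    have hinf : w ∈ PropModel.interp M (Finset.univ.inf fun i =>
        P.map (prod.lift (prod.fst : S ⨯ ∏ᶜ Z ⟶ S) (g i)).op (α (l i))) := by
      have heq : PropModel.interp M (Finset.univ.inf fun i =>
          P.map (prod.lift (prod.fst : S ⨯ ∏ᶜ Z ⟶ S) (g i)).op (α (l i)))
          = Finset.univ.inf fun i => PropModel.interp M
            (P.map (prod.lift (prod.fst : S ⨯ ∏ᶜ Z ⟶ S) (g i)).op (α (l i))) :=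
        map_finset_inf (M.trans.app (op (S ⨯ ∏ᶜ Z))) Finset.univ (fun i =>
          P.map (prod.lift (prod.fst : S ⨯ ∏ᶜ Z ⟶ S) (g i)).op (α (l i)))
      rw [heq, Finset.inf_set_eq_iInter]
      refine Set.mem_iInter₂.2 fun i _ => ?_
      rw [interp_map M (prod.lift (prod.fst : S ⨯ ∏ᶜ Z ⟶ S) (g i)) (α (l i))]
      refine Set.mem_preimage.2 (hyp (l i) _ ?_)
      rw [← FunctorToTypes.map_comp_apply, prod.lift_fst]
      exact hwfst
    have hsup : w ∈ PropModel.interp M (Finset.univ.sup fun j =>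
        P.map (prod.lift (prod.fst : S ⨯ ∏ᶜ Z ⟶ S)
          ((prod.snd : S ⨯ ∏ᶜ Z ⟶ ∏ᶜ Z) ≫ Pi.π Z j)).op (β j)) := by
      have hmono := OrderHomClass.mono (M.trans.app (op (S ⨯ ∏ᶜ Z))) hle
      exact (hmono : PropModel.interp M _ ⊆ PropModel.interp M _) hinf
    have heq : PropModel.interp M (Finset.univ.sup fun j =>
        P.map (prod.lift (prod.fst : S ⨯ ∏ᶜ Z ⟶ S)
          ((prod.snd : S ⨯ ∏ᶜ Z ⟶ ∏ᶜ Z) ≫ Pi.π Z j)).op (β j))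
        = Finset.univ.sup fun j => PropModel.interp M
          (P.map (prod.lift (prod.fst : S ⨯ ∏ᶜ Z ⟶ S)
            ((prod.snd : S ⨯ ∏ᶜ Z ⟶ ∏ᶜ Z) ≫ Pi.π Z j)).op (β j)) :=
      map_finset_sup (M.trans.app (op (S ⨯ ∏ᶜ Z))) Finset.univ (fun j =>
          P.map (prod.lift (prod.fst : S ⨯ ∏ᶜ Z ⟶ S)
            ((prod.snd : S ⨯ ∏ᶜ Z ⟶ ∏ᶜ Z) ≫ Pi.π Z j)).op (β j))
    rw [heq, Finset.sup_set_eq_biUnion] at hsup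
    obtain ⟨j, -, hj⟩ := Set.mem_iUnion₂.1 hsup
    rw [interp_map M (prod.lift (prod.fst : S ⨯ ∏ᶜ Z ⟶ S)
      ((prod.snd : S ⨯ ∏ᶜ Z ⟶ ∏ᶜ Z) ≫ Pi.π Z j)) (β j)] at hj
    have hkey : M.functor.map (prod.lift (prod.fst : S ⨯ ∏ᶜ Z ⟶ S)
        ((prod.snd : S ⨯ ∏ᶜ Z ⟶ ∏ᶜ Z) ≫ Pi.π Z j)) w = wz j := by
      apply (pair_bijective M.functor S (Z j)).1
      refine Prod.ext ?_ ?_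
      · show M.functor.map (prod.fst : S ⨯ Z j ⟶ S) _ = M.functor.map (prod.fst : S ⨯ Z j ⟶ S) (wz j)
        rw [← FunctorToTypes.map_comp_apply, prod.lift_fst, hwfst, hwz1 j]
      · show M.functor.map (prod.snd : S ⨯ Z j ⟶ Z j) _ = M.functor.map (prod.snd : S ⨯ Z j ⟶ Z j) (wz j)
        rw [← FunctorToTypes.map_comp_apply, prod.lift_snd, FunctorToTypes.map_comp_apply,
          hwsnd]
        exact congr_fun hz j
    exact hwz2 j (hkey ▸ Set.mem_preimage.1 hj)


end BooleanDoctrine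
end

section
/- Let P : Cᵒᵖ → BoolAlg be a Boolean doctrine over a category C with finite products, let ī, j̄ ∈ ℕ, let Y₁, …, Y_ī, Z₁, …, Z_j̄ ∈ C, let αᵢ ∈ P(Yᵢ) (i = 1, …, ī) and βⱼ ∈ P(Zⱼ) (j = 1, …, j̄). Then the following are equivalent: (1) the universal filter generated by the family placing αᵢ in component Yᵢ (i = 1, …, ī) intersects, in some component, the universal ideal generated by the family placing βⱼ in component Zⱼ (j = 1, …, j̄); (2) there are n ∈ ℕ, indices l₁, …, l_n ∈ {1, …, ī} and morphisms gᵢ : ∏_{j=1}^{j̄} Zⱼ → Y_{lᵢ} (i = 1, …, n) such that, in P(∏_{j=1}^{j̄} Zⱼ), ⋀_{i=1}^{n} P(gᵢ)(α_{lᵢ}) ≤ ⋁_{j=1}^{j̄} P(prⱼ)(βⱼ). -/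
open CategoryTheory CategoryTheory.Limits Opposite

universe w v u v₁ u₁ v₂ u₂ v₃ u₃

namespace BooleanDoctrine

/-! ### Auxiliary lemmas for Statement 13 -/

instance inst_s13 (X Y : BoolAlg) : BoundedLatticeHomClass (X ⟶ Y) X Y where
  map_sup f := map_sup (ConcreteCategory.hom f)
  map_inf f := map_inf (ConcreteCategory.hom f)
  map_top f := map_top (ConcreteCategory.hom f)
  map_bot f := map_bot (ConcreteCategory.hom f)

section InfHelpers
variable {A : Type*} [SemilatticeInf A] [OrderTop A]

lemma inf_univ_equiv' {ι κ : Type*} [Fintype ι] [Fintype κ] (e : ι ≃ κ) (f : κ → A) :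
    Finset.univ.inf (fun i => f (e i)) = Finset.univ.inf f := by
  apply le_antisymm
  · refine Finset.le_inf fun k _ => ?_
    have := Finset.inf_le (f := fun i => f (e i)) (Finset.mem_univ (e.symm k))
    simpa using this
  · exact Finset.le_inf fun i _ => Finset.inf_le (Finset.mem_univ _)

lemma inf_univ_prod {ι κ : Type*} [Fintype ι] [Fintype κ] (f : ι × κ → A) :
    Finset.univ.inf f = Finset.univ.inf fun i => Finset.univ.inf fun k => f (i, k) := by
  rw [← Finset.univ_product_univ, Finset.inf_product_left]

lemma inf_univ_sum {ι κ : Type*} [Fintype ι] [Fintype κ] (f : ι ⊕ κ → A) :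
    Finset.univ.inf f =
      (Finset.univ.inf fun i => f (.inl i)) ⊓ (Finset.univ.inf fun k => f (.inr k)) := by
  apply le_antisymm
  · exact le_inf (Finset.le_inf fun i _ => Finset.inf_le (Finset.mem_univ _))
      (Finset.le_inf fun k _ => Finset.inf_le (Finset.mem_univ _))
  · refine Finset.le_inf fun i _ => ?_
    rcases i with a | b
    · exact inf_le_left.trans (Finset.inf_le (Finset.mem_univ a))
    · exact inf_le_right.trans (Finset.inf_le (Finset.mem_univ b))
end InfHelpers

lemma inf_sup_pairs {A : Type*} [DistribLattice A] [OrderTop A] {ι κ : Type*} [Fintype ι]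
    [Fintype κ] (u : ι → A) (v : κ → A) :
    (Finset.univ.inf fun p : ι × κ => u p.1 ⊔ v p.2) =
      Finset.univ.inf u ⊔ Finset.univ.inf v := by
  rw [inf_univ_prod]
  calc (Finset.univ.inf fun i => Finset.univ.inf fun k => u i ⊔ v k)
      = Finset.univ.inf fun i => u i ⊔ Finset.univ.inf v := by
        refine Finset.inf_congr rfl fun i _ => ?_
        rw [Finset.inf_sup_distrib_left]
    _ = Finset.univ.inf u ⊔ Finset.univ.inf v := by
        rw [Finset.inf_sup_distrib_right]

section Doctrine
variable {C : Type u₁} [Category.{v₁} C] (P : Cᵒᵖ ⥤ BoolAlg.{w})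

lemma pmap_comp_apply {X Y Z : C} (f : X ⟶ Y) (g : Y ⟶ Z) (a : P.obj (op Z)) :
    P.map (f ≫ g).op a = P.map f.op (P.map g.op a) := by
  rw [op_comp, P.map_comp]; rfl

lemma pmap_mono {X Y : C} (f : X ⟶ Y) {a b : P.obj (op Y)} (h : a ≤ b) :
    P.map f.op a ≤ P.map f.op b := OrderHomClass.mono _ h

lemma pmap_inf_univ {X Y : C} (f : X ⟶ Y) {ι : Type*} [Fintype ι] (t : ι → P.obj (op Y)) :
    P.map f.op (Finset.univ.inf t) = Finset.univ.inf fun i => P.map f.op (t i) :=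
  map_finset_inf _ _ _

lemma pmap_sup_univ {X Y : C} (f : X ⟶ Y) {ι : Type*} [Fintype ι] (t : ι → P.obj (op Y)) :
    P.map f.op (Finset.univ.sup t) = Finset.univ.sup fun i => P.map f.op (t i) :=
  map_finset_sup _ _ _

lemma pmap_eqToHom_refl {X : C} (a : P.obj (op X)) :
    P.map (eqToHom (rfl : X = X)).op a = a := by
  rw [eqToHom_refl, op_id, P.map_id]; rfl

lemma mem_familyOfPoints_self {ι : Type u₃} (Y : ι → C) (α : ∀ i, P.obj (op (Y i))) (i : ι) :
    α i ∈ familyOfPoints P Y α (Y i) :=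
  ⟨i, rfl, (pmap_eqToHom_refl P (α i)).symm⟩

variable [HasFiniteProducts C]

/-- Explicit description of the universal filter generated by a family of points. -/
def F0 {ι₀ : Type} (Y : ι₀ → C) (α : ∀ i, P.obj (op (Y i))) (X : C) :
    Set (P.obj (op X)) :=
  {φ | ∃ (ι : Type) (_ : Fintype ι) (l : ι → ι₀) (f : ∀ i, X ⟶ Y (l i)),
    (Finset.univ.inf fun i => P.map (f i).op (α (l i))) ≤ φ}

/-- Explicit description of the universal ideal generated by a family of points. -/
def I0 {jbar : ℕ} (Z : Fin jbar → C) (β : ∀ j, P.obj (op (Z j))) (X : C) :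
    Set (P.obj (op X)) :=
  {φ | ∃ (ι : Type) (_ : Fintype ι) (h : ι → ((∏ᶜ Z) ⟶ X)),
    (Finset.univ.inf fun r => P.map (h r).op φ) ≤
      Finset.univ.sup fun j => P.map (Pi.π Z j).op (β j)}

lemma F0_isUniversalFilter {ι₀ : Type} (Y : ι₀ → C) (α : ∀ i, P.obj (op (Y i))) :
    IsUniversalFilter P (F0 P Y α) := by
  constructor
  · rintro X X' g φ ⟨ι, _, l, f, hle⟩
    refine ⟨ι, ‹_›, l, fun i => g ≫ f i, ?_⟩
    calc (Finset.univ.inf fun i => P.map (g ≫ f i).op (α (l i)))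
        = Finset.univ.inf fun i => P.map g.op (P.map (f i).op (α (l i))) := by
          exact Finset.inf_congr rfl fun i _ => pmap_comp_apply P _ _ _
      _ = P.map g.op (Finset.univ.inf fun i => P.map (f i).op (α (l i))) :=
          (pmap_inf_univ P g _).symm
      _ ≤ P.map g.op φ := pmap_mono P g hle
  · intro X
    refine ⟨⟨Fin 0, inferInstance, Fin.elim0, fun i => i.elim0, le_top⟩, ?_, ?_⟩
    · rintro a b ⟨ι₁, _, l₁, f₁, h₁⟩ ⟨ι₂, _, l₂, f₂, h₂⟩
      refine ⟨ι₁ ⊕ ι₂, inferInstance, Sum.elim l₁ l₂,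
        fun i => Sum.rec (fun i => f₁ i) (fun i => f₂ i) i, ?_⟩
      rw [inf_univ_sum]
      exact inf_le_inf h₁ h₂
    · rintro a b ⟨ι, _, l, f, h⟩ hab
      exact ⟨ι, ‹_›, l, f, h.trans hab⟩

lemma F0_contains {ι₀ : Type} (Y : ι₀ → C) (α : ∀ i, P.obj (op (Y i))) (X : C) :
    familyOfPoints P Y α X ⊆ F0 P Y α X := by
  rintro a ⟨i, h, rfl⟩
  refine ⟨Fin 1, inferInstance, fun _ => i, fun _ => eqToHom h.symm, ?_⟩
  exact Finset.inf_le (Finset.mem_univ 0)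

lemma I0_isUniversalIdeal {jbar : ℕ} (Z : Fin jbar → C) (β : ∀ j, P.obj (op (Z j))) :
    IsUniversalIdeal P (I0 P Z β) := by
  refine ⟨?_, ?_, ?_, ?_⟩
  · rintro X Y0 m f φ ⟨ι, _, h, hle⟩
    refine ⟨ι × Fin m, inferInstance, fun p => h p.1 ≫ f p.2, ?_⟩
    calc (Finset.univ.inf fun p : ι × Fin m => P.map (h p.1 ≫ f p.2).op φ)
        = Finset.univ.inf fun r =>
            Finset.univ.inf fun k => P.map (h r ≫ f k).op φ := inf_univ_prod _
      _ = Finset.univ.inf fun r =>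
            P.map (h r).op (Finset.univ.inf fun k => P.map (f k).op φ) := by
          refine Finset.inf_congr rfl fun r _ => ?_
          rw [pmap_inf_univ]
          exact Finset.inf_congr rfl fun k _ => pmap_comp_apply P _ _ _
      _ ≤ _ := hle
  · rintro X a b hab ⟨ι, _, h, hle⟩
    refine ⟨ι, ‹_›, h, le_trans ?_ hle⟩
    exact Finset.inf_mono_fun fun r _ => pmap_mono P _ hab
  · rintro X₁ X₂ a₁ a₂ ⟨ι₁, _, h₁, hle₁⟩ ⟨ι₂, _, h₂, hle₂⟩
    refine ⟨ι₁ × ι₂, inferInstance, fun p => prod.lift (h₁ p.1) (h₂ p.2), ?_⟩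
    calc (Finset.univ.inf fun p : ι₁ × ι₂ =>
          P.map (prod.lift (h₁ p.1) (h₂ p.2)).op
            (P.map (prod.fst : X₁ ⨯ X₂ ⟶ X₁).op a₁ ⊔
              P.map (prod.snd : X₁ ⨯ X₂ ⟶ X₂).op a₂))
        = Finset.univ.inf fun p : ι₁ × ι₂ =>
            P.map (h₁ p.1).op a₁ ⊔ P.map (h₂ p.2).op a₂ := by
          refine Finset.inf_congr rfl fun p _ => ?_
          rw [map_sup, ← pmap_comp_apply, ← pmap_comp_apply, prod.lift_fst, prod.lift_snd]
      _ = (Finset.univ.inf fun r => P.map (h₁ r).op a₁) ⊔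
            (Finset.univ.inf fun r => P.map (h₂ r).op a₂) := inf_sup_pairs (fun r => P.map (h₁ r).op a₁) (fun r => P.map (h₂ r).op a₂)
      _ ≤ _ := sup_le hle₁ hle₂
  · refine ⟨Fin 1, inferInstance, fun _ => terminal.from _, ?_⟩
    refine le_trans (Finset.inf_le (Finset.mem_univ 0)) ?_
    rw [map_bot]
    exact bot_le

lemma I0_contains {jbar : ℕ} (Z : Fin jbar → C) (β : ∀ j, P.obj (op (Z j))) (X : C) :
    familyOfPoints P Z β X ⊆ I0 P Z β X := by
  rintro a ⟨j, h, rfl⟩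
  refine ⟨Fin 1, inferInstance, fun _ => Pi.π Z j ≫ eqToHom h, ?_⟩
  have hm : (Pi.π Z j ≫ eqToHom h) ≫ eqToHom h.symm = Pi.π Z j := by simp
  have key : P.map (Pi.π Z j ≫ eqToHom h).op (P.map (eqToHom h.symm).op (β j)) ≤
      Finset.univ.sup fun j => P.map (Pi.π Z j).op (β j) := by
    calc P.map (Pi.π Z j ≫ eqToHom h).op (P.map (eqToHom h.symm).op (β j))
        = P.map ((Pi.π Z j ≫ eqToHom h) ≫ eqToHom h.symm).op (β j) :=
          (pmap_comp_apply P _ _ _).symm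
      _ = P.map (Pi.π Z j).op (β j) := by rw [hm]
      _ ≤ _ := Finset.le_sup (f := fun j => P.map (Pi.π Z j).op (β j)) (Finset.mem_univ j)
  exact le_trans (Finset.inf_le (Finset.mem_univ 0)) key

lemma filter_inf_mem {A : Type*} [BooleanAlgebra A] {S : Set A} (hS : IsBAFilter S)
    {ι : Type*} [Fintype ι] (t : ι → A) (ht : ∀ i, t i ∈ S) : Finset.univ.inf t ∈ S := by
  classical
  induction (Finset.univ : Finset ι) using Finset.cons_induction with
  | empty => simpa using hS.1
  | cons a s ha ih =>
    rw [Finset.inf_cons]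
    exact hS.2.1 _ _ (ht a) ih

/-- In any universal ideal containing all the `γ j`, the join of the reindexings of the
`γ j` along the product projections lies in the component at the product. -/
lemma sup_pi_mem_ideal {J : ∀ X : C, Set (P.obj (op X))} (hJ : IsUniversalIdeal P J) :
    ∀ (m : ℕ) (W : Fin m → C) (γ : ∀ j, P.obj (op (W j))), (∀ j, γ j ∈ J (W j)) →
      (Finset.univ.sup fun j => P.map (Pi.π W j).op (γ j)) ∈ J (∏ᶜ W) := by
  intro m
  induction m with
  | zero =>
    intro W γ _
    have hbot : (⊥ : P.obj (op (∏ᶜ W))) ∈ J (∏ᶜ W) := by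
      apply hJ.1 (⊤_ C) (∏ᶜ W) 1 (fun _ => Pi.lift (fun j => j.elim0)) ⊥
      refine hJ.2.1 _ _ _ (le_trans (Finset.inf_le (Finset.mem_univ 0)) ?_) hJ.2.2.2
      rw [map_bot]
    refine hJ.2.1 _ _ _ ?_ hbot
    simp
  | succ m ih =>
    intro W γ hγ
    have hδ' := ih (fun j : Fin m => W (Fin.succ j)) (fun j : Fin m => γ (Fin.succ j)) (fun j : Fin m => hγ (Fin.succ j))
    have hpair := hJ.2.2.1 (W 0) (∏ᶜ fun j : Fin m => W (Fin.succ j)) (γ 0) _ (hγ 0) hδ'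
    set f : (W 0 ⨯ ∏ᶜ fun j : Fin m => W (Fin.succ j)) ⟶ ∏ᶜ W :=
      Pi.lift (fun j => Fin.cases prod.fst
        (fun j' => prod.snd ≫ Pi.π (fun j : Fin m => W (Fin.succ j)) j') j) with hf
    apply hJ.1 _ _ 1 (fun _ => f)
    refine hJ.2.1 _ _ _ (le_trans (Finset.inf_le (Finset.mem_univ 0)) ?_) hpair
    rw [pmap_sup_univ]
    refine Finset.sup_le fun j _ => ?_
    refine Fin.cases ?_ ?_ j
    · rw [← pmap_comp_apply]
      have h0 : f ≫ Pi.π W 0 = (prod.fst : _ ⟶ W 0) := by simp [hf]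
      rw [h0]
      exact le_sup_left
    · intro j'
      rw [← pmap_comp_apply]
      have hs : f ≫ Pi.π W j'.succ = prod.snd ≫ Pi.π (fun j : Fin m => W (Fin.succ j)) j' := by
        simp [hf]
      rw [hs, pmap_comp_apply]
      refine le_trans (pmap_mono P prod.snd ?_) le_sup_right
      exact Finset.le_sup
        (f := fun k : Fin m => P.map (Pi.π (fun j : Fin m => W (Fin.succ j)) k).op
          (γ (Fin.succ k))) (Finset.mem_univ j')

end Doctrine

theorem stmt13 {C : Type u₁} [Category.{v₁} C] [HasFiniteProducts C]
    (P : Cᵒᵖ ⥤ BoolAlg.{w}) {ibar jbar : ℕ} (Y : Fin ibar → C) (Z : Fin jbar → C)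
    (α : ∀ i, P.obj (op (Y i))) (β : ∀ j, P.obj (op (Z j))) :
    (∃ X : C,
        (genUnivFilter P (familyOfPoints P Y α) X ∩
          genUnivIdeal P (familyOfPoints P Z β) X).Nonempty) ↔
      ∃ (n : ℕ) (l : Fin n → Fin ibar) (g : ∀ i : Fin n, (∏ᶜ Z) ⟶ Y (l i)),
        (Finset.univ.inf fun i => P.map (g i).op (α (l i))) ≤
          Finset.univ.sup fun j => P.map (Pi.π Z j).op (β j) := by
  constructor
  · rintro ⟨X, φ, hF, hI⟩
    obtain ⟨ι, _, l, f, hle⟩ :=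
      hF (F0 P Y α) (F0_isUniversalFilter P Y α) (F0_contains P Y α)
    obtain ⟨κ, _, h, hle'⟩ :=
      hI (I0 P Z β) (I0_isUniversalIdeal P Z β) (I0_contains P Z β)
    set e : Fin (Fintype.card (κ × ι)) ≃ κ × ι := (Fintype.equivFin (κ × ι)).symm with he
    refine ⟨Fintype.card (κ × ι), fun q => l (e q).2, fun q => h (e q).1 ≫ f (e q).2, ?_⟩
    calc (Finset.univ.inf fun q => P.map (h (e q).1 ≫ f (e q).2).op (α (l (e q).2)))
        = Finset.univ.inf fun p : κ × ι => P.map (h p.1 ≫ f p.2).op (α (l p.2)) :=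
          inf_univ_equiv' e (fun p : κ × ι => P.map (h p.1 ≫ f p.2).op (α (l p.2)))
      _ = Finset.univ.inf fun r =>
            P.map (h r).op (Finset.univ.inf fun i => P.map (f i).op (α (l i))) := by
          rw [inf_univ_prod]
          refine Finset.inf_congr rfl fun r _ => ?_
          rw [pmap_inf_univ]
          exact Finset.inf_congr rfl fun i _ => pmap_comp_apply P _ _ _
      _ ≤ Finset.univ.inf fun r => P.map (h r).op φ :=
          Finset.inf_mono_fun fun r _ => pmap_mono P _ hle
      _ ≤ _ := hle'
  · rintro ⟨n, l, g, hle⟩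
    refine ⟨∏ᶜ Z, Finset.univ.inf fun i => P.map (g i).op (α (l i)), ?_, ?_⟩
    · intro G hG hGfam
      refine filter_inf_mem (hG.2 _) _ fun i => ?_
      exact hG.1 _ _ (g i) _ (hGfam _ (mem_familyOfPoints_self P Y α (l i)))
    · intro J hJ hJfam
      refine hJ.2.1 _ _ _ hle ?_
      exact sup_pi_mem_ideal P hJ jbar Z β fun j =>
        hJfam _ (mem_familyOfPoints_self P Z β j)

end BooleanDoctrine
end
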